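/- For the structure A on universe [ℕ]^{<ω} × ℕ^{<ω} with relations W_σ, E_i, P and unary predicates S_n coding a tree Q (S_n((F,σ)) holds for all n, F when σ ∈ Q; for σ ∉ Q there is n_σ with S_{n_σ}((F,σ)) ⟺ F = ∅), any automorphism of A fixes (F,σ) ↦ (F △ H_σ, σ) with H_σ = ∅ for every σ ∉ Q. -/
import Mathlib


open scoped symmDiff

/-- `W σ` singles out the elements whose string coordinate is `σ`. -/
def Wrel (σ : List ℕ) (x : Finset ℕ × List ℕ) : Prop := σ = x.2

/-- `E i` holds between elements with the same string coordinate whose first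
coordinates have symmetric difference `{i}`. -/
def Erel (i : ℕ) (x y : Finset ℕ × List ℕ) : Prop :=
  x.2 = y.2 ∧ x.1 ∆ y.1 = {i}

/-- The parity relation `P`. -/
def Prel (x y : Finset ℕ × List ℕ) : Prop :=
  ∃ i : ℕ, y.2 = x.2 ++ [i] ∧
    ((i ∉ x.1 ∧ Even y.1.card) ∨ (i ∈ x.1 ∧ Odd y.1.card))

theorem stmt_18 (Q : Set (List ℕ))
    (hQ : ∀ σ τ : List ℕ, σ <+: τ → τ ∈ Q → σ ∈ Q)
    (S : ℕ → Finset ℕ × List ℕ → Prop)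
    (hSin : ∀ σ ∈ Q, ∀ (n : ℕ) (F : Finset ℕ), S n (F, σ))
    (hSout : ∀ σ ∉ Q, ∃ n : ℕ, ∀ F : Finset ℕ, S n (F, σ) ↔ F = ∅)
    (g : Finset ℕ × List ℕ → Finset ℕ × List ℕ)
    (hbij : Function.Bijective g)
    (hW : ∀ (σ : List ℕ) (x), Wrel σ x ↔ Wrel σ (g x))
    (hE : ∀ (i : ℕ) (x y), Erel i x y ↔ Erel i (g x) (g y))
    (hP : ∀ x y, Prel x y ↔ Prel (g x) (g y))
    (hS : ∀ (n : ℕ) (x), S n x ↔ S n (g x)) :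
    ∀ σ ∉ Q, ∀ F : Finset ℕ, g (F, σ) = (F, σ) := by
  intro σ hσ
  -- string coordinate is preserved
  have hstr : ∀ F : Finset ℕ, (g (F, σ)).2 = σ := by
    intro F
    have := (hW σ (F, σ)).mp rfl
    exact this.symm
  -- base case: g fixes (∅, σ)
  have hbase : g (∅, σ) = (∅, σ) := by
    obtain ⟨n, hn⟩ := hSout σ hσ
    have hSg : S n (g (∅, σ)) := (hS n (∅, σ)).mp ((hn ∅).mpr rfl)
    have h2 := hstr ∅
    have h1 : (g (∅, σ)).1 = ∅ := by
      have hpair : ((g (∅, σ)).1, σ) = g (∅, σ) := Prod.ext rfl h2.symm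
      exact (hn _).mp (by rw [hpair]; exact hSg)
    exact Prod.ext h1 h2
  intro F
  induction F using Finset.induction_on with
  | empty => exact hbase
  | @insert i F hi ih =>
    have hErel : Erel i (F, σ) (insert i F, σ) := by
      constructor
      · rfl
      · ext j
        simp only [Finset.mem_symmDiff, Finset.mem_insert, Finset.mem_singleton]
        constructor
        · rintro (⟨h1, h2⟩ | ⟨h1, h2⟩)
          · exact absurd (Or.inr h1) h2
          · rcases h1 with h1 | h1
            · exact h1
            · exact absurd h1 h2
        · rintro rfl
          exact Or.inr ⟨Or.inl rfl, hi⟩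
    have hE' := (hE i (F, σ) (insert i F, σ)).mp hErel
    rw [ih] at hE'
    obtain ⟨-, hsd⟩ := hE'
    have h2 := hstr (insert i F)
    have h1 : (g (insert i F, σ)).1 = insert i F := by
      have : F ∆ (g (insert i F, σ)).1 = {i} := hsd
      have key : (g (insert i F, σ)).1 = F ∆ ({i} : Finset ℕ) := by
        have := congrArg (fun A => F ∆ A) this
        simpa [symmDiff_symmDiff_cancel_left] using this
      rw [key]
      ext j
      simp only [Finset.mem_symmDiff, Finset.mem_singleton, Finset.mem_insert]
      constructor
      · rintro (⟨h1, h2⟩ | ⟨h1, h2⟩)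
        · exact Or.inr h1
        · exact Or.inl h1
      · rintro (rfl | h)
        · exact Or.inr ⟨rfl, hi⟩
        · exact Or.inl ⟨h, fun hh => hi (hh ▸ h)⟩
    exact Prod.ext h1 h2
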